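/- Let Λ be a k-graph with a pseudo free self-similar action of a group G. Then the set A := {x ∈ Λ^∞ : for all g ∈ G and p, q ∈ ℕ^k, σ^p(x) = g·σ^q(x) implies g = 1_G and p = q} is dense in Λ^∞ (in the cylinder-set topology) if and only if Λ is G-aperiodic. (Equivalently: the self-similar path groupoid G_{G,Λ} is topologically principal if and only if Λ is G-aperiodic.) -/

import Mathlib

namespace SSKG

/-- `ℕ^k`. -/
abbrev NK (k : ℕ) := Fin k → ℕ
/-- `ℤ^k`. -/
abbrev ZK (k : ℕ) := Fin k → ℤ

lemma le0 {k : ℕ} (p : NK k) : 0 ≤ p := Pi.le_def.mpr fun i => Nat.zero_le (p i)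

/-- A (row-finite, source-free, countable) `k`-graph: a countable small category with a
degree functor `d` into `ℕ^k` satisfying the unique factorization property. -/
structure KGraph (k : ℕ) where
  Obj : Type
  Mor : Type
  countable_mor : Countable Mor
  r : Mor → Obj
  s : Mor → Obj
  d : Mor → NK k
  ofObj : Obj → Mor
  comp : (μ ν : Mor) → s μ = r ν → Mor
  r_ofObj : ∀ v, r (ofObj v) = v
  s_ofObj : ∀ v, s (ofObj v) = v
  d_ofObj : ∀ v, d (ofObj v) = 0
  eq_ofObj_of_d_eq_zero : ∀ μ, d μ = 0 → ∃ v, μ = ofObj v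
  r_comp : ∀ μ ν h, r (comp μ ν h) = r μ
  s_comp : ∀ μ ν h, s (comp μ ν h) = s ν
  d_comp : ∀ μ ν h, d (comp μ ν h) = d μ + d ν
  comp_ofObj : ∀ μ (h : s μ = r (ofObj (s μ))), comp μ (ofObj (s μ)) h = μ
  ofObj_comp : ∀ μ (h : s (ofObj (r μ)) = r μ), comp (ofObj (r μ)) μ h = μ
  comp_assoc : ∀ μ ν ρ (h₁ : s μ = r ν) (h₂ : s ν = r ρ),
      comp (comp μ ν h₁) ρ ((s_comp μ ν h₁).trans h₂)
        = comp μ (comp ν ρ h₂) (h₁.trans (r_comp ν ρ h₂).symm)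
  factor_exists : ∀ μ (n m : NK k), d μ = n + m →
      ∃ (α β : Mor) (h : s α = r β), d α = n ∧ d β = m ∧ comp α β h = μ
  factor_unique : ∀ (α β α' β' : Mor) (h : s α = r β) (h' : s α' = r β'),
      d α = d α' → comp α β h = comp α' β' h' → α = α' ∧ β = β'
  row_finite : ∀ (v : Obj) (n : NK k), {μ : Mor | r μ = v ∧ d μ = n}.Finite
  no_sources : ∀ (v : Obj) (n : NK k), ∃ μ : Mor, r μ = v ∧ d μ = n

lemma KGraph.comp_congr {k : ℕ} (Λ : KGraph k) {μ ν ν' : Λ.Mor} (hν : ν = ν')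
    (h : Λ.s μ = Λ.r ν) (h' : Λ.s μ = Λ.r ν') : Λ.comp μ ν h = Λ.comp μ ν' h' := by
  cases hν; rfl

/-- An edge: a morphism of degree `e_i` for some `i`. -/
def IsEdge {k : ℕ} (Λ : KGraph k) (μ : Λ.Mor) : Prop := ∃ i : Fin k, Λ.d μ = Pi.single i 1

/-- Membership in `Λ⁰ ∪ Λᵉ` (a vertex or an edge). -/
def VorE {k : ℕ} (Λ : KGraph k) (μ : Λ.Mor) : Prop := Λ.d μ = 0 ∨ IsEdge Λ μ

/-- A self-similar action of a group `G` on a `k`-graph `Λ`: an action by degree-,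
range- and source-preserving automorphisms, together with a restriction map
`(g, μ) ↦ g|_μ` satisfying the Exel–Pardo style axioms. -/
structure SelfSimilar (k : ℕ) (G : Type) [Group G] (Λ : KGraph k) where
  act : G → Λ.Mor → Λ.Mor
  res : G → Λ.Mor → G
  act_one : ∀ μ, act 1 μ = μ
  act_mul : ∀ g h μ, act (g * h) μ = act g (act h μ)
  act_d : ∀ g μ, Λ.d (act g μ) = Λ.d μ
  act_ofObj_r : ∀ g μ, act g (Λ.ofObj (Λ.r μ)) = Λ.ofObj (Λ.r (act g μ))
  act_ofObj_s : ∀ g μ, act g (Λ.ofObj (Λ.s μ)) = Λ.ofObj (Λ.s (act g μ))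
  compat : ∀ g μ ν (h : Λ.s μ = Λ.r ν), Λ.s (act g μ) = Λ.r (act (res g μ) ν)
  act_comp : ∀ g μ ν (h : Λ.s μ = Λ.r ν),
      act g (Λ.comp μ ν h) = Λ.comp (act g μ) (act (res g μ) ν) (compat g μ ν h)
  res_ofObj : ∀ g v, res g (Λ.ofObj v) = g
  res_comp : ∀ g μ ν (h : Λ.s μ = Λ.r ν), res g (Λ.comp μ ν h) = res (res g μ) ν
  res_one : ∀ μ, res 1 μ = 1
  res_mul : ∀ g h μ, res (g * h) μ = res g (act h μ) * res h μ

variable {k : ℕ} {G : Type} [Group G] {Λ : KGraph k}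

/-- The induced action of `G` on the vertices `Λ⁰`. -/
def SelfSimilar.actV (S : SelfSimilar k G Λ) (g : G) (v : Λ.Obj) : Λ.Obj :=
  Λ.s (S.act g (Λ.ofObj v))

/-- The action is pseudo free. -/
def SelfSimilar.PseudoFree (S : SelfSimilar k G Λ) : Prop :=
  ∀ (g : G) (μ : Λ.Mor), S.act g μ = μ → S.res g μ = 1 → g = 1

/-- An infinite path in `Λ`: a degree-preserving functor `Ω_k → Λ`, recorded through
its segments `x(p,q)` for `p ≤ q`. -/
structure InfPath {k : ℕ} (Λ : KGraph k) where
  seg : ∀ p q : NK k, p ≤ q → Λ.Mor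
  d_seg : ∀ p q (h : p ≤ q), Λ.d (seg p q h) = fun i => q i - p i
  src_seg : ∀ p q m (h₁ : p ≤ q) (h₂ : q ≤ m), Λ.s (seg p q h₁) = Λ.r (seg q m h₂)
  comp_seg : ∀ p q m (h₁ : p ≤ q) (h₂ : q ≤ m),
      Λ.comp (seg p q h₁) (seg q m h₂) (src_seg p q m h₁ h₂) = seg p m (h₁.trans h₂)

lemma InfPath.ext' {x y : InfPath Λ} (h : x.seg = y.seg) : x = y := by
  cases x; cases y; cases h; rfl

/-- The shift `σ^p(x)`. -/
def InfPath.shift (x : InfPath Λ) (p : NK k) : InfPath Λ where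
  seg m n h := x.seg (m + p) (n + p) (add_le_add_left h p)
  d_seg m n h := by
    rw [x.d_seg]; funext i; simp only [Pi.add_apply]; omega
  src_seg m n l h₁ h₂ := x.src_seg _ _ _ _ _
  comp_seg m n l h₁ h₂ := x.comp_seg _ _ _ _ _

/-- The action of `G` on infinite paths: `(g·x)(p,q) = g|_{x(0,p)} · x(p,q)`. -/
def SelfSimilar.actInf (S : SelfSimilar k G Λ) (g : G) (x : InfPath Λ) : InfPath Λ where
  seg p q h := S.act (S.res g (x.seg 0 p (le0 p))) (x.seg p q h)
  d_seg p q h := by rw [S.act_d, x.d_seg]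
  src_seg p q m h₁ h₂ := by
    have key : S.res g (x.seg 0 q (le0 q))
        = S.res (S.res g (x.seg 0 p (le0 p))) (x.seg p q h₁) := by
      rw [← S.res_comp g (x.seg 0 p (le0 p)) (x.seg p q h₁) (x.src_seg 0 p q (le0 p) h₁),
        x.comp_seg 0 p q (le0 p) h₁]
    beta_reduce
    rw [key]
    exact S.compat _ _ _ (x.src_seg p q m h₁ h₂)
  comp_seg p q m h₁ h₂ := by
    have key : S.res g (x.seg 0 q (le0 q))
        = S.res (S.res g (x.seg 0 p (le0 p))) (x.seg p q h₁) := by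
      rw [← S.res_comp g (x.seg 0 p (le0 p)) (x.seg p q h₁) (x.src_seg 0 p q (le0 p) h₁),
        x.comp_seg 0 p q (le0 p) h₁]
    beta_reduce
    rw [← x.comp_seg p q m h₁ h₂, S.act_comp]
    exact Λ.comp_congr (by rw [key]) _ _

/-- The restriction cocycle `g|_x : ℕ^k → G`, `g|_x(p) = g|_{x(0,p)}`. -/
def SelfSimilar.resInf (S : SelfSimilar k G Λ) (g : G) (x : InfPath Λ) : NK k → G :=
  fun p => S.res g (x.seg 0 p (le0 p))

/-- `IsConcat μ x y` says that `y = μx`, the concatenation of the finite path `μ`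
(with `x(0,0) = s(μ)`) and the infinite path `x`. -/
def IsConcat (Λ : KGraph k) (μ : Λ.Mor) (x y : InfPath Λ) : Prop :=
  x.seg 0 0 le_rfl = Λ.ofObj (Λ.s μ) ∧
  y.seg 0 (Λ.d μ) (le0 _) = μ ∧
  ∀ m n (h : m ≤ n), y.seg (Λ.d μ + m) (Λ.d μ + n) (add_le_add_right h _) = x.seg m n h

/-- The cylinder set `Z(μ)`. -/
def cylinder (Λ : KGraph k) (μ : Λ.Mor) : Set (InfPath Λ) :=
  {x : InfPath Λ | x.seg 0 (Λ.d μ) (le0 _) = μ}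

/-- The cylinder-set topology on `Λ^∞`. -/
instance instTopInfPath (Λ : KGraph k) : TopologicalSpace (InfPath Λ) :=
  TopologicalSpace.generateFrom {U | ∃ μ : Λ.Mor, U = cylinder Λ μ}

/-- `Λ` is `G`-cofinal. -/
def GCofinal (S : SelfSimilar k G Λ) : Prop :=
  ∀ (x : InfPath Λ) (v : Λ.Obj), ∃ (p : NK k) (μ : Λ.Mor) (g : G),
    Λ.ofObj (Λ.s μ) = x.seg p p le_rfl ∧ Λ.r μ = S.actV g v

/-- `Λ` is `G`-aperiodic. -/
def GAperiodic (S : SelfSimilar k G Λ) : Prop :=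
  ∀ v : Λ.Obj, ∃ x : InfPath Λ, x.seg 0 0 le_rfl = Λ.ofObj v ∧
    ∀ (g : G) (p q : NK k), g ≠ 1 ∨ p ≠ q → x.shift p ≠ S.actInf g (x.shift q)

/-- A subset `U ⊆ Λ^∞` is invariant for the self-similar action. -/
def InvariantSet (S : SelfSimilar k G Λ) (U : Set (InfPath Λ)) : Prop :=
  ∀ (g : G) (μ ν : Λ.Mor) (x z y : InfPath Λ),
    Λ.s μ = S.actV g (Λ.s ν) → IsConcat Λ ν x z → IsConcat Λ μ (S.actInf g x) y →
    z ∈ U → y ∈ U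

/-- The minimal common extensions `Λ^min(μ,ν)`. -/
def Lmin (Λ : KGraph k) (μ ν : Λ.Mor) : Set (Λ.Mor × Λ.Mor) :=
  {p | ∃ (h₁ : Λ.s μ = Λ.r p.1) (h₂ : Λ.s ν = Λ.r p.2),
      Λ.comp μ p.1 h₁ = Λ.comp ν p.2 h₂ ∧ Λ.d (Λ.comp μ p.1 h₁) = Λ.d μ ⊔ Λ.d ν}

/-- The group `C(ℕ^k, G)` of all functions `ℕ^k → G` under pointwise multiplication. -/
abbrev CkG (k : ℕ) (G : Type) [Group G] := NK k → G

/-- The normal subgroup of eventually trivial functions. -/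
def tailTrivial (k : ℕ) (G : Type) [Group G] : Subgroup (CkG k G) where
  carrier := {f | ∃ z : NK k, ∀ p, z ≤ p → f p = 1}
  one_mem' := ⟨0, fun _ _ => rfl⟩
  mul_mem' := by
    rintro f g ⟨z₁, h₁⟩ ⟨z₂, h₂⟩
    exact ⟨z₁ ⊔ z₂, fun p hp => by
      rw [Pi.mul_apply, h₁ p (le_trans le_sup_left hp), h₂ p (le_trans le_sup_right hp),
        one_mul]⟩
  inv_mem' := by
    rintro f ⟨z, h⟩
    exact ⟨z, fun p hp => by rw [Pi.inv_apply, h p hp, inv_one]⟩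

instance tailTrivialNormal (k : ℕ) (G : Type) [Group G] : (tailTrivial k G).Normal := by
  constructor
  rintro f ⟨z, hz⟩ g
  exact ⟨z, fun p hp => by
    simp only [Pi.mul_apply, Pi.inv_apply, hz p hp, mul_one, mul_inv_cancel]⟩

/-- The quotient group `Q(ℕ^k, G) = C(ℕ^k,G)/∼`. -/
abbrev QkG (k : ℕ) (G : Type) [Group G] := CkG k G ⧸ tailTrivial k G

/-- Coercion `ℕ^k → ℤ^k`. -/
def toZ {k : ℕ} (p : NK k) : ZK k := fun i => (p i : ℤ)

open scoped Classical in
/-- The translation `T_z` on functions `ℕ^k → G`, for `z ∈ ℤ^k`. -/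
noncomputable def transFun {k : ℕ} {G : Type} [Group G] (z : ZK k) (f : CkG k G) : CkG k G :=
  fun p => if (∀ i, z i ≤ (p i : ℤ)) then f (fun i => ((p i : ℤ) - z i).toNat) else 1

/-- The ambient space `Λ^∞ × (Q(ℕ^k,G) ⋊ ℤ^k) × Λ^∞` containing the self-similar
path groupoid (as a set). -/
abbrev Triple (k : ℕ) (G : Type) [Group G] (Λ : KGraph k) :=
  InfPath Λ × (QkG k G × ZK k) × InfPath Λ

/-- The basic set `Z(μ, g, ν)` of the self-similar path groupoid. -/
def Zset (S : SelfSimilar k G Λ) (μ : Λ.Mor) (g : G) (ν : Λ.Mor) : Set (Triple k G Λ) :=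
  {t | ∃ x y z : InfPath Λ, IsConcat Λ ν x z ∧ IsConcat Λ μ (S.actInf g x) y ∧
    t = (y, ((QuotientGroup.mk (transFun (toZ (Λ.d μ)) (S.resInf g x)) : QkG k G),
      toZ (Λ.d μ) - toZ (Λ.d ν)), z)}

/-- The family `B_{G,Λ}` of basic sets. -/
def BGL (S : SelfSimilar k G Λ) : Set (Set (Triple k G Λ)) :=
  {A | ∃ (μ ν : Λ.Mor) (g : G), Λ.s μ = S.actV g (Λ.s ν) ∧ A = Zset S μ g ν}

/-- The self-similar path groupoid `G_{G,Λ}` (as a set of triples). -/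
def Gpd (S : SelfSimilar k G Λ) : Set (Triple k G Λ) :=
  {t | ∃ (g : G) (μ ν : Λ.Mor), Λ.s μ = S.actV g (Λ.s ν) ∧ t ∈ Zset S μ g ν}

/-- The topology on `G_{G,Λ}` generated by the basic sets. -/
def gpdTop (S : SelfSimilar k G Λ) : TopologicalSpace {t : Triple k G Λ // t ∈ Gpd S} :=
  TopologicalSpace.generateFrom
    {A | ∃ (μ ν : Λ.Mor) (g : G), A = {t | (t : Triple k G Λ) ∈ Zset S μ g ν}}
/-! ### Auxiliary machinery -/

lemma KGraph.comp_congr₂ {k : ℕ} (Λ : KGraph k) {μ μ' ν ν' : Λ.Mor} (hμ : μ = μ')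
    (hν : ν = ν') (h : Λ.s μ = Λ.r ν) (h' : Λ.s μ' = Λ.r ν') :
    Λ.comp μ ν h = Λ.comp μ' ν' h' := by subst hμ; subst hν; rfl

lemma InfPath.seg_congr {k : ℕ} {Λ : KGraph k} (x : InfPath Λ) {p q p' q' : NK k}
    (hp : p = p') (hq : q = q') (h : p ≤ q) (h' : p' ≤ q') :
    x.seg p q h = x.seg p' q' h' := by subst hp; subst hq; rfl

/-- The extension preorder on morphisms. -/
def Ext {k : ℕ} (Λ : KGraph k) (μ ν : Λ.Mor) : Prop :=
  ∃ (γ : Λ.Mor) (h : Λ.s μ = Λ.r γ), Λ.comp μ γ h = ν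

lemma ext_refl {k : ℕ} (Λ : KGraph k) (μ : Λ.Mor) : Ext Λ μ μ :=
  ⟨Λ.ofObj (Λ.s μ), (Λ.r_ofObj _).symm, Λ.comp_ofObj μ _⟩

lemma ext_trans {k : ℕ} {Λ : KGraph k} {μ ν ρ : Λ.Mor} (h1 : Ext Λ μ ν)
    (h2 : Ext Λ ν ρ) : Ext Λ μ ρ := by
  obtain ⟨γ, hγ, rfl⟩ := h1
  obtain ⟨δ, hδ, rfl⟩ := h2
  have hγδ : Λ.s γ = Λ.r δ := by rw [← Λ.s_comp μ γ hγ]; exact hδ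
  exact ⟨Λ.comp γ δ hγδ, hγ.trans (Λ.r_comp γ δ hγδ).symm,
    (Λ.comp_assoc μ γ δ hγ hγδ).symm⟩

/-- Master construction: an infinite path from a cofinal chain of morphisms. -/
lemma exists_path_of_chain {k : ℕ} (Λ : KGraph k) (c : ℕ → Λ.Mor)
    (hchain : ∀ n, Ext Λ (c n) (c (n + 1)))
    (hcof : ∀ q : NK k, ∃ n, q ≤ Λ.d (c n)) :
    ∃ x : InfPath Λ, ∀ (p q : NK k) (h : p ≤ q) (α β : Λ.Mor)
      (h₁ : Λ.s α = Λ.r β) (n : ℕ), Λ.d α = p → Λ.d β = q - p →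
      Ext Λ (Λ.comp α β h₁) (c n) → x.seg p q h = β := by
  have hmono : ∀ m n, m ≤ n → Ext Λ (c m) (c n) := by
    intro m n h
    induction h with
    | refl => exact ext_refl Λ _
    | step h ih => exact ext_trans ih (hchain _)
  have hInitEx : ∀ q : NK k, ∃ α : Λ.Mor, Λ.d α = q ∧ ∃ n, Ext Λ α (c n) := by
    intro q
    obtain ⟨n, hn⟩ := hcof q
    obtain ⟨α, β, hs, hdα, hdβ, hc⟩ := Λ.factor_exists (c n) q (Λ.d (c n) - q)
      (by funext i; have := Pi.le_def.mp hn i; simp only [Pi.add_apply, Pi.sub_apply]; omega)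
    exact ⟨α, hdα, n, β, hs, hc⟩
  have hInitUniq : ∀ (q : NK k) (α α' : Λ.Mor), Λ.d α = q → (∃ n, Ext Λ α (c n)) →
      Λ.d α' = q → (∃ n, Ext Λ α' (c n)) → α = α' := by
    rintro q α α' hdα ⟨n, hn⟩ hdα' ⟨n', hn'⟩
    obtain ⟨γ, hγ, hcγ⟩ := ext_trans hn (hmono n (max n n') (le_max_left _ _))
    obtain ⟨γ', hγ', hcγ'⟩ := ext_trans hn' (hmono n' (max n n') (le_max_right _ _))
    exact (Λ.factor_unique α γ α' γ' hγ hγ' (hdα.trans hdα'.symm) (hcγ.trans hcγ'.symm)).1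
  choose a hda hext using hInitEx
  have hb : ∀ (p q : NK k), p ≤ q → ∃ (β : Λ.Mor) (h : Λ.s (a p) = Λ.r β),
      Λ.comp (a p) β h = a q ∧ Λ.d β = q - p := by
    intro p q hpq
    obtain ⟨α, β, hs, hdα, hdβ, hc⟩ := Λ.factor_exists (a q) p (q - p)
      (by rw [hda]; funext i; have := Pi.le_def.mp hpq i;
          simp only [Pi.add_apply, Pi.sub_apply]; omega)
    have hαa : α = a p := by
      refine hInitUniq p α (a p) hdα ?_ (hda p) (hext p)
      obtain ⟨n, hn⟩ := hext q
      exact ⟨n, ext_trans ⟨β, hs, hc⟩ hn⟩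
    exact ⟨β, hαa ▸ hs, (Λ.comp_congr₂ hαa rfl hs (hαa ▸ hs)).symm.trans hc, hdβ⟩
  choose b hsb hcb hdb using hb
  have hbuniq : ∀ (p q : NK k) (hpq : p ≤ q) (β : Λ.Mor) (h : Λ.s (a p) = Λ.r β),
      Λ.comp (a p) β h = a q → β = b p q hpq := by
    intro p q hpq β h hc
    exact (Λ.factor_unique (a p) β (a p) (b p q hpq) h (hsb p q hpq) rfl
      (hc.trans (hcb p q hpq).symm)).2
  refine ⟨⟨b, ?_, ?_, ?_⟩, ?_⟩
  · intro p q h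
    exact (hdb p q h).trans (by funext i; rfl)
  · intro p q m h₁ h₂
    have h3 : Λ.s (a q) = Λ.s (b p q h₁) := by rw [← hcb p q h₁, Λ.s_comp]
    exact h3.symm.trans (hsb q m h₂)
  · intro p q m h₁ h₂
    have h3 : Λ.s (a q) = Λ.s (b p q h₁) := by rw [← hcb p q h₁, Λ.s_comp]
    have hsqm : Λ.s (b p q h₁) = Λ.r (b q m h₂) := h3.symm.trans (hsb q m h₂)
    have hc1 : Λ.comp (Λ.comp (a p) (b p q h₁) (hsb p q h₁)) (b q m h₂)
        ((Λ.s_comp (a p) (b p q h₁) (hsb p q h₁)).trans hsqm) = a m :=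
      (Λ.comp_congr₂ (hcb p q h₁) rfl
        ((Λ.s_comp (a p) (b p q h₁) (hsb p q h₁)).trans hsqm) (hsb q m h₂)).trans
        (hcb q m h₂)
    have hcomp : Λ.comp (a p) (Λ.comp (b p q h₁) (b q m h₂) hsqm)
        ((hsb p q h₁).trans (Λ.r_comp _ _ hsqm).symm) = a m :=
      (Λ.comp_assoc (a p) (b p q h₁) (b q m h₂) (hsb p q h₁) hsqm).symm.trans hc1
    exact hbuniq p m (h₁.trans h₂) _ ((hsb p q h₁).trans (Λ.r_comp _ _ hsqm).symm)
      hcomp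
  · intro p q h α β h₁ n hdα hdβ hext'
    obtain ⟨γ, hγ, hcγ⟩ := hext'
    have hsβγ : Λ.s β = Λ.r γ := by rw [← Λ.s_comp α β h₁]; exact hγ
    have hαγ : Λ.comp α (Λ.comp β γ hsβγ) (h₁.trans (Λ.r_comp β γ hsβγ).symm) = c n :=
      (Λ.comp_assoc α β γ h₁ hsβγ).symm.trans hcγ
    have hαa : α = a p := hInitUniq p α (a p) hdα
      ⟨n, Λ.comp β γ hsβγ, h₁.trans (Λ.r_comp β γ hsβγ).symm, hαγ⟩ (hda p) (hext p)
    have hdαβ : Λ.d (Λ.comp α β h₁) = q := by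
      rw [Λ.d_comp, hdα, hdβ]; funext i
      have := Pi.le_def.mp h i
      simp only [Pi.add_apply, Pi.sub_apply]; omega
    have hαβa : Λ.comp α β h₁ = a q :=
      hInitUniq q _ _ hdαβ ⟨n, γ, hγ, hcγ⟩ (hda q) (hext q)
    exact (hbuniq p q h β (hαa ▸ h₁)
      ((Λ.comp_congr₂ hαa.symm rfl (hαa ▸ h₁) h₁).trans hαβa)).symm

/-- Refined version: also gives initial-segment characterization. -/
lemma exists_path_of_chain' {k : ℕ} (Λ : KGraph k) (c : ℕ → Λ.Mor)
    (hchain : ∀ n, Ext Λ (c n) (c (n + 1)))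
    (hcof : ∀ q : NK k, ∃ n, q ≤ Λ.d (c n)) :
    ∃ x : InfPath Λ,
      (∀ (q : NK k) (h : (0:NK k) ≤ q) (β : Λ.Mor) (n : ℕ),
          Λ.d β = q → Ext Λ β (c n) → x.seg 0 q h = β) ∧
      (∀ (p q : NK k) (h : p ≤ q) (α β : Λ.Mor) (h₁ : Λ.s α = Λ.r β) (n : ℕ),
          Λ.d α = p → Λ.d β = q - p → Ext Λ (Λ.comp α β h₁) (c n) → x.seg p q h = β) := by
  obtain ⟨x, hx⟩ := exists_path_of_chain Λ c hchain hcof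
  refine ⟨x, ?_, hx⟩
  intro q h β n hdβ hext'
  refine hx 0 q h (Λ.ofObj (Λ.r β)) β (Λ.s_ofObj (Λ.r β)) n (Λ.d_ofObj _) ?_ ?_
  · rw [hdβ]; funext i; simp
  · rw [Λ.ofObj_comp β (Λ.s_ofObj (Λ.r β))]; exact hext'

noncomputable def ext1 {k : ℕ} (Λ : KGraph k) (μ : Λ.Mor) : Λ.Mor :=
  (Λ.no_sources (Λ.s μ) (fun _ => 1)).choose

lemma ext1_r {k : ℕ} (Λ : KGraph k) (μ : Λ.Mor) : Λ.s μ = Λ.r (ext1 Λ μ) :=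
  ((Λ.no_sources (Λ.s μ) (fun _ => 1)).choose_spec.1).symm

lemma ext1_d {k : ℕ} (Λ : KGraph k) (μ : Λ.Mor) : Λ.d (ext1 Λ μ) = fun _ => 1 :=
  (Λ.no_sources (Λ.s μ) (fun _ => 1)).choose_spec.2

noncomputable def chainAt {k : ℕ} (Λ : KGraph k) (v : Λ.Obj) : ℕ → Λ.Mor
  | 0 => Λ.ofObj v
  | n + 1 => Λ.comp (chainAt Λ v n) (ext1 Λ (chainAt Λ v n)) (ext1_r Λ _)

lemma exists_path_at {k : ℕ} (Λ : KGraph k) (v : Λ.Obj) :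
    ∃ x : InfPath Λ, x.seg 0 0 le_rfl = Λ.ofObj v := by
  have hchain : ∀ n, Ext Λ (chainAt Λ v n) (chainAt Λ v (n + 1)) :=
    fun n => ⟨ext1 Λ (chainAt Λ v n), ext1_r Λ _, rfl⟩
  have hdeg : ∀ n, Λ.d (chainAt Λ v n) = fun _ => n := by
    intro n
    induction n with
    | zero => show Λ.d (Λ.ofObj v) = _; rw [Λ.d_ofObj]; rfl
    | succ n ih =>
        show Λ.d (Λ.comp _ _ _) = _
        rw [Λ.d_comp, ih, ext1_d]
        funext i; simp
  have hcof : ∀ q : NK k, ∃ n, q ≤ Λ.d (chainAt Λ v n) := by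
    intro q
    refine ⟨Finset.univ.sup q, Pi.le_def.mpr fun i => ?_⟩
    rw [hdeg]
    exact Finset.le_sup (Finset.mem_univ i)
  obtain ⟨x, hx0, -⟩ := exists_path_of_chain' Λ (chainAt Λ v) hchain hcof
  exact ⟨x, hx0 0 le_rfl (Λ.ofObj v) 0 (Λ.d_ofObj v) (ext_refl Λ _)⟩

lemma exists_concat {k : ℕ} (Λ : KGraph k) (μ : Λ.Mor) (y : InfPath Λ)
    (hy : y.seg 0 0 le_rfl = Λ.ofObj (Λ.s μ)) :
    ∃ z : InfPath Λ, IsConcat Λ μ y z := by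
  have hcz : ∀ (q : NK k) (h : (0:NK k) ≤ q), Λ.s μ = Λ.r (y.seg 0 q h) := by
    intro q h
    have h1 := y.src_seg 0 0 q le_rfl h
    rw [hy, Λ.s_ofObj] at h1
    exact h1
  have hchain : ∀ n, Ext Λ (Λ.comp μ (y.seg 0 (fun _ => n) (le0 _)) (hcz _ (le0 _)))
      (Λ.comp μ (y.seg 0 (fun _ => n + 1) (le0 _)) (hcz _ (le0 _))) := by
    intro n
    have hle : (fun _ => n : NK k) ≤ fun _ => n + 1 := Pi.le_def.mpr fun i => Nat.le_succ n
    refine ⟨y.seg (fun _ => n) (fun _ => n + 1) hle, ?_, ?_⟩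
    · rw [Λ.s_comp]
      exact y.src_seg 0 _ _ (le0 _) hle
    · refine (Λ.comp_assoc μ _ _ _ (y.src_seg 0 _ _ (le0 _) hle)).trans ?_
      exact Λ.comp_congr (y.comp_seg 0 _ _ (le0 _) hle) _ _
  have hcof : ∀ q : NK k, ∃ n,
      q ≤ Λ.d (Λ.comp μ (y.seg 0 (fun _ => n) (le0 _)) (hcz _ (le0 _))) := by
    intro q
    refine ⟨Finset.univ.sup q, Pi.le_def.mpr fun i => ?_⟩
    rw [Λ.d_comp, y.d_seg]
    simp only [Pi.add_apply, Pi.zero_apply]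
    have : q i ≤ Finset.univ.sup q := Finset.le_sup (Finset.mem_univ i)
    omega
  obtain ⟨x, hx0, hx⟩ := exists_path_of_chain' Λ
    (fun n => Λ.comp μ (y.seg 0 (fun _ => n) (le0 _)) (hcz _ (le0 _))) hchain hcof
  refine ⟨x, hy, ?_, ?_⟩
  · exact hx0 (Λ.d μ) (le0 _) μ 0 rfl
      ⟨y.seg 0 (fun _ => 0) (le0 _), hcz _ (le0 _), rfl⟩
  · intro m n h
    have hnN : n ≤ (fun _ => Finset.univ.sup n : NK k) :=
      Pi.le_def.mpr fun i => Finset.le_sup (Finset.mem_univ i)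
    have hα : Λ.s (Λ.comp μ (y.seg 0 m (le0 m)) (hcz m (le0 m))) = Λ.r (y.seg m n h) := by
      rw [Λ.s_comp]; exact y.src_seg 0 m n (le0 m) h
    refine hx (Λ.d μ + m) (Λ.d μ + n) (add_le_add_right h _)
      (Λ.comp μ (y.seg 0 m (le0 m)) (hcz m (le0 m))) (y.seg m n h) hα
      (Finset.univ.sup n) ?_ ?_ ?_
    · rw [Λ.d_comp, y.d_seg]; funext i; simp only [Pi.add_apply]; simp
    · rw [y.d_seg]; funext i
      have := Pi.le_def.mp h i
      simp only [Pi.add_apply, Pi.sub_apply]; omega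
    · have hsβ : Λ.s (Λ.comp (Λ.comp μ (y.seg 0 m (le0 m)) (hcz m (le0 m)))
          (y.seg m n h) hα) = Λ.r (y.seg n (fun _ => Finset.univ.sup n) hnN) := by
        rw [Λ.s_comp]; exact y.src_seg m n _ h hnN
      refine ⟨y.seg n (fun _ => Finset.univ.sup n) hnN, hsβ, ?_⟩
      have e1 : Λ.comp (Λ.comp μ (y.seg 0 m (le0 m)) (hcz m (le0 m))) (y.seg m n h) hα
          = Λ.comp μ (y.seg 0 n (le0 n)) (hcz n (le0 n)) := by
        refine (Λ.comp_assoc μ _ _ _ (y.src_seg 0 m n (le0 m) h)).trans ?_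
        exact Λ.comp_congr (y.comp_seg 0 m n (le0 m) h) _ _
      have h2 : Λ.s (Λ.comp μ (y.seg 0 n (le0 n)) (hcz n (le0 n)))
          = Λ.r (y.seg n (fun _ => Finset.univ.sup n) hnN) := by
        rw [Λ.s_comp]; exact y.src_seg 0 n _ (le0 n) hnN
      have e2 : Λ.comp (Λ.comp μ (y.seg 0 n (le0 n)) (hcz n (le0 n)))
          (y.seg n (fun _ => Finset.univ.sup n) hnN) h2
          = Λ.comp μ (y.seg 0 (fun _ => Finset.univ.sup n) (le0 _)) (hcz _ (le0 _)) := by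
        refine (Λ.comp_assoc μ _ _ _ (y.src_seg 0 n _ (le0 n) hnN)).trans ?_
        exact Λ.comp_congr (y.comp_seg 0 n _ (le0 n) hnN) _ _
      exact (Λ.comp_congr₂ e1 rfl hsβ h2).trans e2

lemma mem_cylinder_self {k : ℕ} {Λ : KGraph k} (x : InfPath Λ) (q : NK k)
    (h : (0:NK k) ≤ q) : x ∈ cylinder Λ (x.seg 0 q h) := by
  show x.seg 0 (Λ.d (x.seg 0 q h)) (le0 _) = x.seg 0 q h
  exact x.seg_congr rfl (by rw [x.d_seg]; funext i; simp) _ _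

lemma cylinder_subset {k : ℕ} {Λ : KGraph k} {x : InfPath Λ} {μ : Λ.Mor}
    (hx : x ∈ cylinder Λ μ) {q : NK k} (hq : Λ.d μ ≤ q) :
    cylinder Λ (x.seg 0 q (le0 q)) ⊆ cylinder Λ μ := by
  intro y hy
  have hdρ : Λ.d (x.seg 0 q (le0 q)) = q := by rw [x.d_seg]; funext i; simp
  have hyq : y.seg 0 q (le0 q) = x.seg 0 q (le0 q) :=
    (y.seg_congr rfl hdρ.symm (le0 q) (le0 _)).trans hy
  have h1 := y.comp_seg 0 (Λ.d μ) q (le0 _) hq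
  have h2 := x.comp_seg 0 (Λ.d μ) q (le0 _) hq
  have key := Λ.factor_unique (y.seg 0 (Λ.d μ) (le0 _)) (y.seg (Λ.d μ) q hq)
    (x.seg 0 (Λ.d μ) (le0 _)) (x.seg (Λ.d μ) q hq) (y.src_seg 0 (Λ.d μ) q (le0 _) hq)
    (x.src_seg 0 (Λ.d μ) q (le0 _) hq) (by rw [y.d_seg, x.d_seg])
    (by rw [h1, h2, hyq])
  exact key.1.trans hx

lemma open_nhds_cylinder {k : ℕ} {Λ : KGraph k} {U : Set (InfPath Λ)} (hU : IsOpen U)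
    {x : InfPath Λ} (hx : x ∈ U) :
    ∃ μ : Λ.Mor, x ∈ cylinder Λ μ ∧ cylinder Λ μ ⊆ U := by
  have hU' : TopologicalSpace.GenerateOpen {V | ∃ μ : Λ.Mor, V = cylinder Λ μ} U := hU
  clear hU
  induction hU' with
  | basic V hV =>
      obtain ⟨μ, rfl⟩ := hV
      exact ⟨μ, hx, subset_rfl⟩
  | univ => exact ⟨x.seg 0 0 le_rfl, mem_cylinder_self x 0 le_rfl, Set.subset_univ _⟩
  | inter U V hUo hVo ihU ihV =>
      obtain ⟨μ, hμm, hμs⟩ := ihU hx.1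
      obtain ⟨ν, hνm, hνs⟩ := ihV hx.2
      refine ⟨x.seg 0 (Λ.d μ ⊔ Λ.d ν) (le0 _), mem_cylinder_self x _ (le0 _), ?_⟩
      intro y hy
      exact ⟨hμs (cylinder_subset hμm le_sup_left hy),
        hνs (cylinder_subset hνm le_sup_right hy)⟩
  | sUnion S hS ih =>
      obtain ⟨V, hVS, hxV⟩ := hx
      obtain ⟨μ, hm, hs⟩ := ih V hVS hxV
      exact ⟨μ, hm, hs.trans (Set.subset_sUnion_of_mem hVS)⟩

lemma shift_shift {k : ℕ} {Λ : KGraph k} (x : InfPath Λ) (p m : NK k) :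
    (x.shift p).shift m = x.shift (m + p) := by
  apply InfPath.ext'
  funext a b h
  show x.seg (a + m + p) (b + m + p) (add_le_add_left (add_le_add_left h m) p)
      = x.seg (a + (m + p)) (b + (m + p)) (add_le_add_left h (m + p))
  exact x.seg_congr (add_assoc a m p) (add_assoc b m p) _ _

lemma shift_actInf {k : ℕ} {G : Type} [Group G] {Λ : KGraph k} (S : SelfSimilar k G Λ)
    (g : G) (w : InfPath Λ) (m : NK k) :
    (S.actInf g w).shift m = S.actInf (S.res g (w.seg 0 m (le0 m))) (w.shift m) := by
  apply InfPath.ext'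
  funext a b h
  show S.act (S.res g (w.seg 0 (a + m) (le0 _))) (w.seg (a + m) (b + m) (add_le_add_left h m))
      = S.act (S.res (S.res g (w.seg 0 m (le0 m)))
          (w.seg (0 + m) (a + m) (add_le_add_left (le0 a) m)))
        (w.seg (a + m) (b + m) (add_le_add_left h m))
  congr 1
  have hm : m ≤ a + m := le_add_self
  have h1 : w.seg (0 + m) (a + m) (add_le_add_left (le0 a) m) = w.seg m (a + m) hm :=
    w.seg_congr (zero_add m) rfl _ _
  rw [h1, ← S.res_comp g (w.seg 0 m (le0 m)) (w.seg m (a + m) hm)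
      (w.src_seg 0 m (a + m) (le0 m) hm), w.comp_seg 0 m (a + m) (le0 m) hm]

lemma shift_concat {k : ℕ} {Λ : KGraph k} {μ : Λ.Mor} {y z : InfPath Λ}
    (hc : IsConcat Λ μ y z) {a : NK k} (ha : Λ.d μ ≤ a) :
    z.shift a = y.shift (a - Λ.d μ) := by
  apply InfPath.ext'
  funext m n h
  show z.seg (m + a) (n + a) (add_le_add_left h a)
      = y.seg (m + (a - Λ.d μ)) (n + (a - Λ.d μ)) (add_le_add_left h _)
  have e1 : m + a = Λ.d μ + (m + (a - Λ.d μ)) := by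
    funext i; have := Pi.le_def.mp ha i
    simp only [Pi.add_apply, Pi.sub_apply]; omega
  have e2 : n + a = Λ.d μ + (n + (a - Λ.d μ)) := by
    funext i; have := Pi.le_def.mp ha i
    simp only [Pi.add_apply, Pi.sub_apply]; omega
  have hmn : m + (a - Λ.d μ) ≤ n + (a - Λ.d μ) := add_le_add_left h _
  rw [z.seg_congr e1 e2 (add_le_add_left h a) (add_le_add_right hmn _), hc.2.2 _ _ hmn]

lemma res_seg_zero {k : ℕ} {G : Type} [Group G] {Λ : KGraph k} (S : SelfSimilar k G Λ)
    (g : G) (w : InfPath Λ) : S.res g (w.seg 0 0 (le0 0)) = g := by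
  obtain ⟨v, hv⟩ := Λ.eq_ofObj_of_d_eq_zero (w.seg 0 0 (le0 0))
    (by rw [w.d_seg]; funext i; simp)
  rw [hv, S.res_ofObj]

/-- for a pseudo free action, the set of infinite paths with trivial
"isotropy" is dense in `Λ^∞` iff `Λ` is `G`-aperiodic (topological principality of the
self-similar path groupoid). -/
theorem stmt16 {k : ℕ} (hk : 0 < k) (G : Type) [Group G] [Countable G]
    (Λ : KGraph k) (S : SelfSimilar k G Λ) (hpf : S.PseudoFree) :
    Dense {x : InfPath Λ | ∀ (g : G) (p q : NK k),
        x.shift p = S.actInf g (x.shift q) → g = 1 ∧ p = q} ↔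
      GAperiodic S := by
  constructor
  · -- Dense → GAperiodic
    intro hdense v
    obtain ⟨x₀, hx₀⟩ := exists_path_at Λ v
    have hopen : IsOpen (cylinder Λ (Λ.ofObj v)) := by
      exact TopologicalSpace.GenerateOpen.basic _ ⟨Λ.ofObj v, rfl⟩
    have hne : (cylinder Λ (Λ.ofObj v)).Nonempty := by
      refine ⟨x₀, ?_⟩
      show x₀.seg 0 (Λ.d (Λ.ofObj v)) (le0 _) = Λ.ofObj v
      rw [x₀.seg_congr rfl (Λ.d_ofObj v) (le0 _) le_rfl, hx₀]
    obtain ⟨z, hz⟩ := dense_iff_inter_open.mp hdense _ hopen hne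
    refine ⟨z, ?_, ?_⟩
    · have h1 : z.seg 0 (Λ.d (Λ.ofObj v)) (le0 _) = Λ.ofObj v := hz.1
      rw [← h1]
      exact z.seg_congr rfl (Λ.d_ofObj v).symm _ _
    · intro g p q hne' heq
      obtain ⟨h1, h2⟩ := hz.2 g p q heq
      rcases hne' with h | h
      · exact h h1
      · exact h h2
  · -- GAperiodic → Dense
    intro hap
    rw [dense_iff_inter_open]
    rintro U hU ⟨x, hx⟩
    obtain ⟨μ, hxμ, hsub⟩ := open_nhds_cylinder hU hx
    obtain ⟨y, hy0, hy⟩ := hap (Λ.s μ)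
    obtain ⟨z, hzc⟩ := exists_concat Λ μ y hy0
    refine ⟨z, hsub hzc.2.1, ?_⟩
    intro g p q heq
    have hmp : Λ.d μ ≤ Λ.d μ + p :=
      Pi.le_def.mpr fun i => by simp only [Pi.add_apply]; omega
    have hmq : Λ.d μ ≤ Λ.d μ + q :=
      Pi.le_def.mpr fun i => by simp only [Pi.add_apply]; omega
    have key : z.shift (Λ.d μ + p)
        = S.actInf (S.res g ((z.shift q).seg 0 (Λ.d μ) (le0 _))) (z.shift (Λ.d μ + q)) := by
      rw [← shift_shift z p (Λ.d μ), heq, shift_actInf, shift_shift]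
    have ep : (Λ.d μ + p) - Λ.d μ = p := by
      funext i; simp only [Pi.add_apply, Pi.sub_apply]; omega
    have eq' : (Λ.d μ + q) - Λ.d μ = q := by
      funext i; simp only [Pi.add_apply, Pi.sub_apply]; omega
    have e1 := shift_concat hzc hmp
    have e2 := shift_concat hzc hmq
    rw [ep] at e1
    rw [eq'] at e2
    rw [e1, e2] at key
    have hnot : ¬(S.res g ((z.shift q).seg 0 (Λ.d μ) (le0 _)) ≠ 1 ∨ p ≠ q) :=
      fun hc => hy _ p q hc key
    rw [not_or, not_not, not_not] at hnot
    obtain ⟨hg1, hpq⟩ := hnot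
    subst hpq
    refine ⟨?_, rfl⟩
    have hfix : S.act g ((z.shift p).seg 0 (Λ.d μ) (le0 _))
        = (z.shift p).seg 0 (Λ.d μ) (le0 _) := by
      have h1 : (z.shift p).seg 0 (Λ.d μ) (le0 _)
          = S.act (S.res g ((z.shift p).seg 0 0 (le0 0)))
              ((z.shift p).seg 0 (Λ.d μ) (le0 _)) :=
        congrArg (fun t : InfPath Λ => t.seg 0 (Λ.d μ) (le0 _)) heq
      rw [res_seg_zero] at h1
      exact h1.symm
    exact hpf g _ hfix hg1

end SSKG
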